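/- Let F = {f_0,...,f_n} be an ET-system on [c,d] and let g ∈ C^n([a,b],[c,d]) with g' > 0 on [a,b]. Then {f_0∘g,...,f_n∘g} is an ET-system on [a,b] and W(f_0∘g,...,f_n∘g) = (g')^{n(n+1)/2} · (W(f_0,...,f_n) ∘ g). -/

import Mathlib

open Set

/-- `f` has at most `N` zeros in `[a,b]` counted with algebraic multiplicities. -/
def ZerosLE (a b : ℝ) (f : ℝ → ℝ) (N : ℕ) : Prop :=
  ∀ z : Finset ℝ, ↑z ⊆ Set.Icc a b →
    ∀ m : ℝ → ℕ,
      (∀ x ∈ z, ∀ k < m x, iteratedDerivWithin k f (Set.Icc a b) x = 0) →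
      ∑ x ∈ z, m x ≤ N

/-- An ET-system of order `n` on `[a,b]`: `C^n` functions such that every nonzero
linear combination has at most `n` zeros counted with algebraic multiplicities. -/
def IsETSystem (n : ℕ) (a b : ℝ) (F : Fin (n + 1) → ℝ → ℝ) : Prop :=
  (∀ i, ContDiffOn ℝ n (F i) (Set.Icc a b)) ∧
    ∀ c : Fin (n + 1) → ℝ, c ≠ 0 → ZerosLE a b (fun x => ∑ i, c i * F i x) n

/-- The Wronskian determinant of `F` on `[a,b]`. -/
noncomputable def Wr (n : ℕ) (a b : ℝ) (F : Fin (n + 1) → ℝ → ℝ) (x : ℝ) : ℝ :=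
  Matrix.det (Matrix.of fun i k : Fin (n + 1) =>
    iteratedDerivWithin (k : ℕ) (F i) (Set.Icc a b) x)

/-- Faà di Bruno style coefficients for iterated derivatives of a composition. -/
noncomputable def Bco (s : Set ℝ) (g : ℝ → ℝ) : ℕ → ℕ → ℝ → ℝ
  | 0, 0 => fun _ => 1
  | 0, _ + 1 => fun _ => 0
  | k + 1, 0 => derivWithin (Bco s g k 0) s
  | k + 1, j + 1 => fun x =>
      derivWithin (Bco s g k (j + 1)) s x + Bco s g k j x * derivWithin g s x

lemma Bco_zero {s : Set ℝ} (hs : UniqueDiffOn ℝ s) (g : ℝ → ℝ) :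
    ∀ k j, k < j → ∀ x ∈ s, Bco s g k j x = 0 := by
  intro k
  induction k with
  | zero =>
    rintro (_ | j) h x hx
    · omega
    · rfl
  | succ k ih =>
    rintro (_ | j) h x hx
    · omega
    · show derivWithin (Bco s g k (j + 1)) s x + Bco s g k j x * derivWithin g s x = 0
      have h1 : derivWithin (Bco s g k (j + 1)) s x = derivWithin (fun _ => (0 : ℝ)) s x :=
        derivWithin_congr (fun y hy => ih _ (by omega) y hy) (ih _ (by omega) x hx)
      rw [h1, (hasDerivWithinAt_const _ _ (0:ℝ)).derivWithin (hs x hx), ih _ (by omega) x hx]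
      ring

lemma Bco_diag {s : Set ℝ} (hs : UniqueDiffOn ℝ s) (g : ℝ → ℝ) :
    ∀ k, ∀ x ∈ s, Bco s g k k x = derivWithin g s x ^ k := by
  intro k
  induction k with
  | zero => intro x hx; simp [Bco]
  | succ k ih =>
    intro x hx
    show derivWithin (Bco s g k (k + 1)) s x + Bco s g k k x * derivWithin g s x
      = derivWithin g s x ^ (k + 1)
    have h1 : derivWithin (Bco s g k (k + 1)) s x = derivWithin (fun _ => (0 : ℝ)) s x :=
      derivWithin_congr (fun y hy => Bco_zero hs g k (k + 1) (by omega) y hy)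
        (Bco_zero hs g k (k + 1) (by omega) x hx)
    rw [h1, (hasDerivWithinAt_const _ _ (0:ℝ)).derivWithin (hs x hx), ih x hx]
    ring

lemma Bco_smooth {n : ℕ} {s : Set ℝ} (hs : UniqueDiffOn ℝ s) {g : ℝ → ℝ}
    (hg : ContDiffOn ℝ n g s) :
    ∀ k, k ≤ n → ∀ j, ContDiffOn ℝ (↑(n - k)) (Bco s g k j) s := by
  intro k
  induction k with
  | zero =>
    rintro _ (_ | j)
    · exact contDiffOn_const.of_le (by exact_mod_cast le_top)
    · exact contDiffOn_const.of_le (by exact_mod_cast le_top)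
  | succ k ih =>
    intro hk j
    have hd : ∀ j', ContDiffOn ℝ (↑(n - (k + 1))) (derivWithin (Bco s g k j') s) s := by
      intro j'
      exact (ih (by omega) j').derivWithin hs (by norm_cast; omega)
    have hg' : ContDiffOn ℝ (↑(n - (k + 1))) (derivWithin g s) s := by
      exact hg.derivWithin hs (by norm_cast; omega)
    match j with
    | 0 => exact hd 0
    | j + 1 =>
      exact (hd (j + 1)).add
        (((ih (by omega) j).of_le (by norm_cast; omega)).mul hg')

lemma Bco_key {n : ℕ} {s t : Set ℝ} {g h : ℝ → ℝ}
    (hs : UniqueDiffOn ℝ s) (ht : UniqueDiffOn ℝ t)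
    (hg : ContDiffOn ℝ n g s) (hmap : Set.MapsTo g s t)
    (hh : ContDiffOn ℝ n h t) :
    ∀ k, k ≤ n → ∀ x ∈ s, iteratedDerivWithin k (h ∘ g) s x
      = ∑ j ∈ Finset.range (k + 1), Bco s g k j x * iteratedDerivWithin j h t (g x) := by
  intro k
  induction k with
  | zero =>
    intro _ x hx
    simp [Bco, Function.comp]
  | succ k ih =>
    intro hk x hx
    have hk' : k ≤ n := by omega
    have e1 : iteratedDerivWithin (k + 1) (h ∘ g) s x
        = derivWithin (fun y => ∑ j ∈ Finset.range (k + 1),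
            Bco s g k j y * iteratedDerivWithin j h t (g y)) s x := by
      rw [iteratedDerivWithin_succ]
      exact derivWithin_congr (fun y hy => ih hk' y hy) (ih hk' x hx)
    have hgd : HasDerivWithinAt g (derivWithin g s x) s x :=
      ((hg x hx).differentiableWithinAt
        (by exact_mod_cast (by omega : n ≠ 0))).hasDerivWithinAt
    have hterm : ∀ j ∈ Finset.range (k + 1), HasDerivWithinAt
        (fun y => Bco s g k j y * iteratedDerivWithin j h t (g y))
        (derivWithin (Bco s g k j) s x * iteratedDerivWithin j h t (g x)
          + Bco s g k j x * (iteratedDerivWithin (j + 1) h t (g x) * derivWithin g s x)) s x := by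
      intro j hj
      have hjk : j ≤ k := by simpa [Nat.lt_succ_iff] using hj
      have hBd : HasDerivWithinAt (Bco s g k j) (derivWithin (Bco s g k j) s x) s x := by
        have := (Bco_smooth hs hg k hk' j).differentiableOn
          (by exact_mod_cast (by omega : n - k ≠ 0))
        exact (this x hx).hasDerivWithinAt
      have hHd : HasDerivWithinAt (iteratedDerivWithin j h t)
          (iteratedDerivWithin (j + 1) h t (g x)) t (g x) := by
        have hdiff := hh.differentiableOn_iteratedDerivWithin
          (show (j : WithTop ℕ∞) < n by exact_mod_cast Nat.cast_lt.mpr (by omega)) ht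
        have := (hdiff (g x) (hmap hx)).hasDerivWithinAt
        rwa [← iteratedDerivWithin_succ] at this
      exact hBd.mul (hHd.comp x hgd hmap)
    have hsum := HasDerivWithinAt.fun_sum hterm
    rw [e1, hsum.derivWithin (hs x hx)]
    have hdBtop : derivWithin (Bco s g k (k + 1)) s x = 0 := by
      have h1 : derivWithin (Bco s g k (k + 1)) s x = derivWithin (fun _ => (0 : ℝ)) s x :=
        derivWithin_congr (fun y hy => Bco_zero hs g k (k + 1) (by omega) y hy)
          (Bco_zero hs g k (k + 1) (by omega) x hx)
      rw [h1]
      exact (hasDerivWithinAt_const _ _ (0 : ℝ)).derivWithin (hs x hx)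
    rw [Finset.sum_range_succ'
      (fun j => Bco s g (k + 1) j x * iteratedDerivWithin j h t (g x)) (k + 1)]
    have expand : ∀ i ∈ Finset.range (k + 1),
        Bco s g (k + 1) (i + 1) x * iteratedDerivWithin (i + 1) h t (g x)
          = derivWithin (Bco s g k (i + 1)) s x * iteratedDerivWithin (i + 1) h t (g x)
            + Bco s g k i x * (iteratedDerivWithin (i + 1) h t (g x) * derivWithin g s x) := by
      intro i _
      show (derivWithin (Bco s g k (i + 1)) s x + Bco s g k i x * derivWithin g s x) * _ = _
      ring
    rw [Finset.sum_congr rfl expand, Finset.sum_add_distrib, Finset.sum_add_distrib,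
      Finset.sum_range_succ'
        (fun j => derivWithin (Bco s g k j) s x * iteratedDerivWithin j h t (g x)) k,
      Finset.sum_range_succ
        (fun i => derivWithin (Bco s g k (i + 1)) s x * iteratedDerivWithin (i + 1) h t (g x)) k,
      hdBtop]
    rw [show Bco s g (k + 1) 0 = derivWithin (Bco s g k 0) s from rfl]
    ring

/-- Transfer of vanishing of iterated derivatives along a composition. -/
lemma Bco_vanish {n : ℕ} {s t : Set ℝ} {g h : ℝ → ℝ}
    (hs : UniqueDiffOn ℝ s) (ht : UniqueDiffOn ℝ t)
    (hg : ContDiffOn ℝ n g s) (hmap : Set.MapsTo g s t)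
    (hh : ContDiffOn ℝ n h t) {x : ℝ} (hx : x ∈ s)
    (hg'x : derivWithin g s x ≠ 0) {k : ℕ} (hk : k ≤ n)
    (hvan : ∀ i ≤ k, iteratedDerivWithin i (h ∘ g) s x = 0) :
    ∀ i ≤ k, iteratedDerivWithin i h t (g x) = 0 := by
  intro i
  induction i using Nat.strong_induction_on with
  | _ i IH =>
    intro hik
    have h0 := hvan i hik
    rw [Bco_key hs ht hg hmap hh i (by omega) x hx, Finset.sum_range_succ] at h0
    have hz : ∑ j ∈ Finset.range i, Bco s g i j x * iteratedDerivWithin j h t (g x) = 0 := by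
      refine Finset.sum_eq_zero fun j hj => ?_
      have hji := Finset.mem_range.mp hj
      rw [IH j hji (by omega)]
      ring
    rw [hz, zero_add, Bco_diag hs g i x hx] at h0
    exact (mul_eq_zero.mp h0).resolve_left (pow_ne_zero i hg'x)

theorem stmt12 (n : ℕ) (a b c d : ℝ) (hab : a < b) (hcd : c < d)
    (F : Fin (n + 1) → ℝ → ℝ) (hF : IsETSystem n c d F)
    (g : ℝ → ℝ) (hg : ContDiffOn ℝ n g (Set.Icc a b))
    (hmap : ∀ x ∈ Set.Icc a b, g x ∈ Set.Icc c d)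
    (hg' : ∀ x ∈ Set.Icc a b, 0 < derivWithin g (Set.Icc a b) x) :
    IsETSystem n a b (fun i => F i ∘ g) ∧
      ∀ x ∈ Set.Icc a b,
        Wr n a b (fun i => F i ∘ g) x =
          derivWithin g (Set.Icc a b) x ^ (n * (n + 1) / 2) * Wr n c d F (g x) := by
  have hs : UniqueDiffOn ℝ (Set.Icc a b) := uniqueDiffOn_Icc hab
  have ht : UniqueDiffOn ℝ (Set.Icc c d) := uniqueDiffOn_Icc hcd
  have hmap' : Set.MapsTo g (Set.Icc a b) (Set.Icc c d) := hmap
  have gdiff : ∀ x ∈ Set.Icc a b, DifferentiableWithinAt ℝ g (Set.Icc a b) x := by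
    intro x hx
    by_contra hne
    have h1 := hg' x hx
    rw [derivWithin_zero_of_not_differentiableWithinAt hne] at h1
    exact lt_irrefl 0 h1
  have gcont : ContinuousOn g (Set.Icc a b) := fun x hx => (gdiff x hx).continuousWithinAt
  have gmono : StrictMonoOn g (Set.Icc a b) := by
    refine strictMonoOn_of_deriv_pos (convex_Icc a b) gcont fun x hx => ?_
    rw [interior_Icc] at hx
    have h1 := hg' x (Ioo_subset_Icc_self hx)
    rwa [derivWithin_of_mem_nhds (Icc_mem_nhds hx.1 hx.2)] at h1
  refine ⟨⟨fun i => (hF.1 i).comp hg hmap', ?_⟩, ?_⟩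
  · -- ZerosLE
    intro cv hcv z hz m hvan
    set h : ℝ → ℝ := fun y => ∑ i, cv i * F i y with hh_def
    have hhc : ContDiffOn ℝ n h (Set.Icc c d) :=
      ContDiffOn.sum fun i _ => contDiffOn_const.mul (hF.1 i)
    have hinj : Set.InjOn g z := fun x hx y hy hxy =>
      gmono.injOn (hz hx) (hz hy) hxy
    classical
    set m₀ : ℝ → ℕ := fun x => min (m x) (n + 1) with hm₀
    set m' : ℝ → ℕ := fun y => ∑ x ∈ z.filter (fun x' => g x' = y), m₀ x with hm'
    have hsingle : ∀ x₀ ∈ z, z.filter (fun x' => g x' = g x₀) = {x₀} := by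
      intro x₀ hx₀
      ext x'
      simp only [Finset.mem_filter, Finset.mem_singleton]
      constructor
      · rintro ⟨hx', he⟩
        exact gmono.injOn (hz hx') (hz hx₀) he
      · rintro rfl; exact ⟨hx₀, rfl⟩
    have hm'g : ∀ x₀ ∈ z, m' (g x₀) = m₀ x₀ := by
      intro x₀ hx₀
      rw [hm']
      simp only []
      rw [hsingle x₀ hx₀, Finset.sum_singleton]
    have key := hF.2 cv hcv (z.image g)
      (by
        intro y hy
        rcases Finset.mem_image.mp (by exact_mod_cast hy) with ⟨x₀, hx₀, rfl⟩
        exact hmap _ (hz hx₀)) m'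
      (by
        intro y hy k hk
        rcases Finset.mem_image.mp hy with ⟨x₀, hx₀, rfl⟩
        rw [hm'g x₀ hx₀] at hk
        have hk2 : k < min (m x₀) (n + 1) := hk
        have hkn : k ≤ n := by omega
        have hkm : k < m x₀ := by omega
        refine Bco_vanish hs ht hg hmap' hhc (hz hx₀)
          (ne_of_gt (hg' x₀ (hz hx₀))) hkn ?_ k le_rfl
        intro i hik
        exact hvan x₀ hx₀ i (by omega))
    have hsumeq : ∑ y ∈ z.image g, m' y = ∑ x ∈ z, m₀ x := by
      rw [Finset.sum_image (fun x hx y hy => hinj hx hy)]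
      exact Finset.sum_congr rfl hm'g
    rw [hsumeq] at key
    have heach : ∀ x ∈ z, m x = m₀ x := by
      intro x hx
      have h1 : m₀ x ≤ n := le_trans (Finset.single_le_sum (fun _ _ => Nat.zero_le _) hx) key
      have h2 : min (m x) (n + 1) ≤ n := h1
      have h3 : m₀ x = min (m x) (n + 1) := rfl
      omega
    calc ∑ x ∈ z, m x = ∑ x ∈ z, m₀ x := Finset.sum_congr rfl heach
      _ ≤ n := key
  · -- Wronskian formula
    intro x hx
    set G := derivWithin g (Set.Icc a b) x with hG
    set A : Matrix (Fin (n + 1)) (Fin (n + 1)) ℝ :=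
      Matrix.of fun i j : Fin (n + 1) =>
        iteratedDerivWithin (j : ℕ) (F i) (Set.Icc c d) (g x) with hA
    set C : Matrix (Fin (n + 1)) (Fin (n + 1)) ℝ :=
      Matrix.of fun j k : Fin (n + 1) => Bco (Set.Icc a b) g (k : ℕ) (j : ℕ) x with hC
    have hM : (Matrix.of fun i k : Fin (n + 1) =>
        iteratedDerivWithin (k : ℕ) (F i ∘ g) (Set.Icc a b) x) = A * C := by
      ext i k
      have hkn : (k : ℕ) ≤ n := by omega
      rw [Matrix.mul_apply]
      show iteratedDerivWithin (k : ℕ) (F i ∘ g) (Set.Icc a b) x = _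
      rw [Bco_key hs ht hg hmap' (hF.1 i) (k : ℕ) hkn x hx]
      have hext : ∑ j ∈ Finset.range ((k : ℕ) + 1),
          Bco (Set.Icc a b) g (k : ℕ) j x * iteratedDerivWithin j (F i) (Set.Icc c d) (g x)
          = ∑ j ∈ Finset.range (n + 1),
          Bco (Set.Icc a b) g (k : ℕ) j x * iteratedDerivWithin j (F i) (Set.Icc c d) (g x) := by
        refine Finset.sum_subset (Finset.range_subset_range.mpr (by omega)) ?_
        intro j hj hnj
        rw [Bco_zero hs g (k : ℕ) j
          (by simp only [Finset.mem_range] at hj hnj; omega) x hx]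
        ring
      rw [hext, ← Fin.sum_univ_eq_sum_range (fun j =>
        Bco (Set.Icc a b) g (k : ℕ) j x * iteratedDerivWithin j (F i) (Set.Icc c d) (g x)) (n + 1)]
      exact Finset.sum_congr rfl fun j _ => mul_comm _ _
    have hCtri : C.BlockTriangular id := by
      intro p q hlt
      show Bco (Set.Icc a b) g (q : ℕ) (p : ℕ) x = 0
      exact Bco_zero hs g _ _ (by exact_mod_cast hlt) x hx
    have hdetC : C.det = G ^ (n * (n + 1) / 2) := by
      rw [Matrix.det_of_upperTriangular hCtri]
      have : ∀ p : Fin (n + 1), C p p = G ^ (p : ℕ) := fun p => Bco_diag hs g _ x hx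
      rw [Finset.prod_congr rfl fun p _ => this p, Finset.prod_pow_eq_pow_sum]
      congr 1
      rw [Fin.sum_univ_eq_sum_range (fun i => i) (n + 1), Finset.sum_range_id]
      simp [Nat.mul_comm]
    show Matrix.det _ = G ^ (n * (n + 1) / 2) * Wr n c d F (g x)
    rw [hM, Matrix.det_mul, hdetC]
    rw [Wr]
    ring
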